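/- There do not exist five pairwise disjoint two-point sets C₁, C₂, C₃, C₄, C₅ ⊂ ℝ³ such that the union over all 1 ≤ i < j ≤ 5 of the midpoint sets (1/2)(C_i + C_j) is convexly independent. Equivalently, no geometric graph in ℝ³ whose edge midpoints are convexly independent contains the complete 5-partite graph K_{2,2,2,2,2}. -/

import Mathlib

open Pointwise Filter

noncomputable section

/-- A set in `ℝ^d` is convexly independent if no point of it lies in the
convex hull of the other points. -/
def ConvInd {d : ℕ} (S : Set (Fin d → ℝ)) : Prop :=
  ∀ p ∈ S, p ∉ convexHull ℝ (S \ {p})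

/-- `Efun d n` : the maximum, over `n`-point sets `P ⊂ ℝ^d`, of the number of
unordered pairs of distinct points of `P` whose midpoints are pairwise distinct
and form a convexly independent set.  Unordered pairs are encoded as ordered
pairs with the reversed pair excluded. -/
def Efun (d n : ℕ) : ℕ :=
  sSup {k | ∃ (P : Finset (Fin d → ℝ)) (T : Finset ((Fin d → ℝ) × (Fin d → ℝ))),
    P.card = n ∧
    (∀ e ∈ T, e.1 ∈ P ∧ e.2 ∈ P ∧ e.1 ≠ e.2 ∧ (e.2, e.1) ∉ T) ∧
    Set.InjOn (fun e : (Fin d → ℝ) × (Fin d → ℝ) => midpoint ℝ e.1 e.2) ↑T ∧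
    ConvInd ((fun e : (Fin d → ℝ) × (Fin d → ℝ) => midpoint ℝ e.1 e.2) '' ↑T) ∧
    T.card = k}

/-- `Mfun d m n` : the maximum, over `m`-point sets `P` and `n`-point sets `Q` in `ℝ^d`,
of the size of a convexly independent subset of the Minkowski sum `P + Q`. -/
def Mfun (d m n : ℕ) : ℕ :=
  sSup {k | ∃ P Q S : Finset (Fin d → ℝ),
    P.card = m ∧ Q.card = n ∧
    (S : Set (Fin d → ℝ)) ⊆ (P : Set (Fin d → ℝ)) + (Q : Set (Fin d → ℝ)) ∧
    ConvInd (S : Set (Fin d → ℝ)) ∧ S.card = k}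

/-- A norm on `ℝ^d` whose unit ball is strictly convex (the unit sphere contains
no nondegenerate segment, expressed via midpoints of distinct unit vectors). -/
structure StrictNorm (d : ℕ) where
  toFun : (Fin d → ℝ) → ℝ
  eq_zero_iff : ∀ x, toFun x = 0 ↔ x = 0
  smul_eq : ∀ (a : ℝ) (x : Fin d → ℝ), toFun (a • x) = |a| * toFun x
  add_le : ∀ x y, toFun (x + y) ≤ toFun x + toFun y
  strictly_convex : ∀ x y, toFun x = 1 → toFun y = 1 → x ≠ y →
    toFun ((1 / 2 : ℝ) • (x + y)) < 1

/-- A (not necessarily strictly convex) norm on `ℝ^d`. -/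
structure NormOn (d : ℕ) where
  toFun : (Fin d → ℝ) → ℝ
  eq_zero_iff : ∀ x, toFun x = 0 ↔ x = 0
  smul_eq : ∀ (a : ℝ) (x : Fin d → ℝ), toFun (a • x) = |a| * toFun x
  add_le : ∀ x y, toFun (x + y) ≤ toFun x + toFun y

/-- `Wfun d n` : the maximum, over `n`-point sets `S ⊂ ℝ^d` and strictly convex
norms on `ℝ^d`, of the number of pairwise nonparallel unit-distance pairs in `S`.
(The nonparallelity condition between distinct ordered pairs automatically rules
out listing any unordered pair twice.) -/
def Wfun (d n : ℕ) : ℕ :=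
  sSup {k | ∃ (S : Finset (Fin d → ℝ)) (ν : StrictNorm d)
      (T : Finset ((Fin d → ℝ) × (Fin d → ℝ))),
    S.card = n ∧
    (∀ e ∈ T, e.1 ∈ S ∧ e.2 ∈ S ∧ ν.toFun (e.1 - e.2) = 1) ∧
    (∀ e ∈ T, ∀ f ∈ T, e ≠ f → ∀ c : ℝ, e.1 - e.2 ≠ c • (f.1 - f.2)) ∧
    T.card = k}

/-- `Ufun d n` : the maximum, over `n`-point sets `S ⊂ ℝ^d` and strictly convex
norms on `ℝ^d`, of the number of unordered unit-distance pairs in `S`. -/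
def Ufun (d n : ℕ) : ℕ :=
  sSup {k | ∃ (S : Finset (Fin d → ℝ)) (ν : StrictNorm d)
      (T : Finset ((Fin d → ℝ) × (Fin d → ℝ))),
    S.card = n ∧
    (∀ e ∈ T, e.1 ∈ S ∧ e.2 ∈ S ∧ e.1 ≠ e.2 ∧ ν.toFun (e.1 - e.2) = 1 ∧ (e.2, e.1) ∉ T) ∧
    T.card = k}

/-- `Dfun d n` : the maximum, over `n`-point sets `S ⊂ ℝ^d` and strictly convex
norms on `ℝ^d`, of the number of unordered diameter pairs in `S` (pairs of points
whose distance equals the diameter `D` of `S` in the norm). -/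
def Dfun (d n : ℕ) : ℕ :=
  sSup {k | ∃ (S : Finset (Fin d → ℝ)) (ν : StrictNorm d)
      (T : Finset ((Fin d → ℝ) × (Fin d → ℝ))) (D : ℝ),
    S.card = n ∧
    (∀ p ∈ S, ∀ q ∈ S, ν.toFun (p - q) ≤ D) ∧
    (∃ p ∈ S, ∃ q ∈ S, ν.toFun (p - q) = D) ∧
    (∀ e ∈ T, e.1 ∈ S ∧ e.2 ∈ S ∧ e.1 ≠ e.2 ∧ ν.toFun (e.1 - e.2) = D ∧ (e.2, e.1) ∉ T) ∧
    T.card = k}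

/-- A family of sets in `ℝ^d` is strictly antipodal if for each pair of points
`p ∈ A i`, `q ∈ A j` with `i ≠ j` there is a linear functional `φ` with
`φ p < φ r < φ q` for every other point `r` of the union. -/
def StrictlyAntipodal {d : ℕ} {ι : Type*} (A : ι → Set (Fin d → ℝ)) : Prop :=
  ∀ i j, i ≠ j → ∀ p ∈ A i, ∀ q ∈ A j, ∃ φ : (Fin d → ℝ) →ₗ[ℝ] ℝ,
    ∀ r ∈ ⋃ t, A t, r ≠ p → r ≠ q → φ p < φ r ∧ φ r < φ q

/-- `aconst d` = `a(d)` : the largest `k` such that for every `m` there is a strictly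
antipodal family of `k` sets in `ℝ^d`, each of size at least `m`. -/
def aconst (d : ℕ) : ℕ :=
  sSup {k | ∀ m : ℕ, ∃ A : Fin k → Finset (Fin d → ℝ),
    (∀ i, m ≤ (A i).card) ∧ StrictlyAntipodal (fun i => ((A i : Set (Fin d → ℝ))))}

/-- The set of midpoints between points in different members of a family of finite sets. -/
def midSet {d : ℕ} {ι : Type*} (B : ι → Finset (Fin d → ℝ)) : Set (Fin d → ℝ) :=
  {x | ∃ i j, i ≠ j ∧ ∃ p ∈ B i, ∃ q ∈ B j, x = midpoint ℝ p q}

/-- The set of differences between points in different members of a family of sets. -/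
def diffSet {d : ℕ} {ι : Type*} (A : ι → Set (Fin d → ℝ)) : Set (Fin d → ℝ) :=
  {x | ∃ i j, i ≠ j ∧ ∃ p ∈ A i, ∃ q ∈ A j, x = p - q}

-- ======================================================================
-- Auxiliary material for `no_K22222`
-- ======================================================================

abbrev NoKV := Fin 3 → ℝ

lemma midpoint_eq' (x y : NoKV) : midpoint ℝ x y = (2⁻¹ : ℝ) • (x + y) := by
  rw [midpoint_eq_smul_add, invOf_eq_inv]

lemma midpoint_add_eq {x y u v : NoKV} (h : midpoint ℝ x y = midpoint ℝ u v) :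
    x + y = u + v := by
  rw [midpoint_eq', midpoint_eq'] at h
  have := congrArg (fun r => (2 : ℝ) • r) h
  simpa [smul_smul] using this

lemma sum_smul_mid {ι : Type*} (s : Finset ι) (w : ι → ℝ) (z : ι → NoKV) (y : NoKV)
    (hsum : ∑ k ∈ s, w k = 1) :
    ∑ k ∈ s, w k • midpoint ℝ y (z k) = (2⁻¹ : ℝ) • (y + ∑ k ∈ s, w k • z k) := by
  simp only [midpoint_eq']
  have h1 : ∀ k ∈ s, w k • ((2⁻¹ : ℝ) • (y + z k))
      = (2⁻¹ : ℝ) • (w k • y) + (2⁻¹ : ℝ) • (w k • z k) := by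
    intro k _
    rw [smul_comm, smul_add, smul_add]
  rw [Finset.sum_congr rfl h1, Finset.sum_add_distrib, ← Finset.smul_sum, ← Finset.smul_sum,
    ← Finset.sum_smul, hsum, one_smul, ← smul_add]

lemma patternB (C : Fin 5 → Finset NoKV) {i0 j0 : Fin 5} (hij : i0 ≠ j0)
    {x0 y0 : NoKV} (hx0 : x0 ∈ C i0) (hy0 : y0 ∈ C j0)
    (s : Finset (Fin 5)) (z : Fin 5 → NoKV) (w : Fin 5 → ℝ)
    (hzmem : ∀ k ∈ s, ∃ m, m ≠ j0 ∧ z k ∈ C m)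
    (hzx : ∀ k ∈ s, z k ≠ x0)
    (hw : ∀ k ∈ s, 0 ≤ w k) (hsum : ∑ k ∈ s, w k = 1)
    (hrep : ∑ k ∈ s, w k • z k = x0) :
    ¬ ConvInd (midSet C) := by
  intro hCI
  have hm0 : midpoint ℝ x0 y0 ∈ midSet C := ⟨i0, j0, hij, x0, hx0, y0, hy0, rfl⟩
  refine hCI _ hm0 ?_
  have hcm : midpoint ℝ x0 y0 = s.centerMass w (fun k => midpoint ℝ y0 (z k)) := by
    rw [Finset.centerMass_eq_of_sum_1 _ _ hsum, sum_smul_mid s w z y0 hsum, hrep,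
      midpoint_eq', add_comm]
  have hmemCM : s.centerMass w (fun k => midpoint ℝ y0 (z k))
      ∈ convexHull ℝ (midSet C \ {midpoint ℝ x0 y0}) := by
    refine Finset.centerMass_mem_convexHull _ hw (by rw [hsum]; norm_num) ?_
    intro k hk
    obtain ⟨m, hmj, hzm⟩ := hzmem k hk
    refine ⟨⟨j0, m, Ne.symm hmj, y0, hy0, z k, hzm, by rw [midpoint_comm]⟩, ?_⟩
    intro hmem
    have heq : midpoint ℝ y0 (z k) = midpoint ℝ x0 y0 := hmem
    have := midpoint_add_eq heq
    exact hzx k hk (by linear_combination (norm := module) this)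
  rwa [← hcm] at hmemCM

lemma patternA (C : Fin 5 → Finset NoKV) {i0 j0 : Fin 5} (hij : i0 ≠ j0)
    {x0 y0 : NoKV} (hx0 : x0 ∈ C i0) (hy0 : y0 ∈ C j0)
    {α β : ℝ} (hα : 0 ≤ α) (hβ : 0 ≤ β) (hαβ : α + β = 1)
    (s : Finset (Fin 5)) (z : Fin 5 → NoKV) (w : Fin 5 → ℝ)
    (hzmem : ∀ k ∈ s, ∃ m, m ≠ i0 ∧ m ≠ j0 ∧ z k ∈ C m)
    (hzx : ∀ k ∈ s, z k ≠ x0) (hzy : ∀ k ∈ s, z k ≠ y0)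
    (hw : ∀ k ∈ s, 0 ≤ w k) (hsum : ∑ k ∈ s, w k = 1)
    (hrep : ∑ k ∈ s, w k • z k = α • x0 + β • y0) :
    ¬ ConvInd (midSet C) := by
  intro hCI
  have hm0 : midpoint ℝ x0 y0 ∈ midSet C := ⟨i0, j0, hij, x0, hx0, y0, hy0, rfl⟩
  refine hCI _ hm0 ?_
  set S := midSet C \ {midpoint ℝ x0 y0} with hS
  have hA : s.centerMass w (fun k => midpoint ℝ x0 (z k)) ∈ convexHull ℝ S := by
    refine Finset.centerMass_mem_convexHull _ hw (by rw [hsum]; norm_num) ?_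
    intro k hk
    obtain ⟨m, hmi, hmj, hzm⟩ := hzmem k hk
    refine ⟨⟨i0, m, Ne.symm hmi, x0, hx0, z k, hzm, rfl⟩, ?_⟩
    intro hmem
    have heq : midpoint ℝ x0 (z k) = midpoint ℝ x0 y0 := hmem
    have := midpoint_add_eq heq
    exact hzy k hk (by linear_combination (norm := module) this)
  have hB : s.centerMass w (fun k => midpoint ℝ y0 (z k)) ∈ convexHull ℝ S := by
    refine Finset.centerMass_mem_convexHull _ hw (by rw [hsum]; norm_num) ?_
    intro k hk
    obtain ⟨m, hmi, hmj, hzm⟩ := hzmem k hk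
    refine ⟨⟨j0, m, Ne.symm hmj, y0, hy0, z k, hzm, rfl⟩, ?_⟩
    intro hmem
    have heq : midpoint ℝ y0 (z k) = midpoint ℝ x0 y0 := hmem
    have := midpoint_add_eq heq
    exact hzx k hk (by linear_combination (norm := module) this)
  have hc := (convex_convexHull ℝ S) hA hB hβ hα (by linarith)
  have hval : β • s.centerMass w (fun k => midpoint ℝ x0 (z k))
      + α • s.centerMass w (fun k => midpoint ℝ y0 (z k)) = midpoint ℝ x0 y0 := by
    rw [Finset.centerMass_eq_of_sum_1 _ _ hsum, Finset.centerMass_eq_of_sum_1 _ _ hsum,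
      sum_smul_mid s w z x0 hsum, sum_smul_mid s w z y0 hsum, hrep, midpoint_eq']
    have hb : β = 1 - α := by linarith
    subst hb
    module
  rw [← hval]
  exact hc


lemma exists_dep (t : Fin 5 → NoKV) :
    ∃ w : Fin 5 → ℝ, ∑ i, w i = 0 ∧ ∑ i, w i • t i = 0 ∧ ∃ i, w i ≠ 0 := by
  have hnli : ¬ LinearIndependent ℝ (fun k : Fin 4 => t k.succ - t 0) := by
    intro hli
    have h4 := hli.fintype_card_le_finrank
    rw [Module.finrank_fin_fun] at h4
    simp at h4
  obtain ⟨g, hg0, i, hgi⟩ := Fintype.not_linearIndependent_iff.mp hnli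
  refine ⟨Fin.cons (-∑ k, g k) g, ?_, ?_, ⟨i.succ, by simpa using hgi⟩⟩
  · rw [Fin.sum_univ_succ]
    simp
  · rw [Fin.sum_univ_succ]
    simp only [Fin.cons_zero, Fin.cons_succ]
    have hexp : ∑ k, g k • (t k.succ - t 0) = ∑ k, g k • t k.succ - (∑ k, g k) • t 0 := by
      rw [Finset.sum_smul, ← Finset.sum_sub_distrib]
      exact Finset.sum_congr rfl fun k _ => smul_sub _ _ _
    rw [hexp] at hg0
    have : ∑ k, g k • t k.succ = (∑ k, g k) • t 0 := by
      have := sub_eq_zero.mp hg0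
      exact this
    rw [this, neg_smul, neg_add_cancel]

lemma exists_pos_entry (w : Fin 5 → ℝ) (h0 : ∑ i, w i = 0) {i₀ : Fin 5} (hne : w i₀ ≠ 0) :
    ∃ i, 0 < w i := by
  by_contra h
  push_neg at h
  have hlt : w i₀ < 0 := lt_of_le_of_ne (h i₀) hne
  have hsum : ∑ i, w i < ∑ _i : Fin 5, (0:ℝ) :=
    Finset.sum_lt_sum (fun i _ => h i) ⟨i₀, Finset.mem_univ _, hlt⟩
  simp [h0] at hsum


lemma sum_PN {M : Type*} [AddCommMonoid M] (w : Fin 5 → ℝ) (f : Fin 5 → M)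
    (hf : ∀ i, w i = 0 → f i = 0) :
    ∑ i, f i = (∑ i ∈ Finset.univ.filter (fun i => 0 < w i), f i)
      + ∑ i ∈ Finset.univ.filter (fun i => w i < 0), f i := by
  classical
  rw [← Finset.sum_filter_add_sum_filter_not Finset.univ (fun i => 0 < w i) f]
  congr 1
  refine (Finset.sum_subset ?_ ?_).symm
  · intro k hk
    simp only [Finset.mem_filter, Finset.mem_univ, true_and] at hk ⊢
    exact not_lt.mpr hk.le
  · intro k hk1 hk2
    simp only [Finset.mem_filter, Finset.mem_univ, true_and, not_lt] at hk1 hk2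
    exact hf k (le_antisymm hk1 hk2)

lemma depCase (C : Fin 5 → Finset NoKV)
    (t : Fin 5 → NoKV) (ht : ∀ k, t k ∈ C k) (htne : ∀ p q : Fin 5, p ≠ q → t p ≠ t q)
    (w : Fin 5 → ℝ) (hw0 : ∑ i, w i = 0) (hwt : ∑ i, w i • t i = 0)
    (hPN : (Finset.univ.filter fun i => 0 < w i).card
        ≤ (Finset.univ.filter fun i => w i < 0).card)
    (hP : ∃ i, 0 < w i) :
    ¬ ConvInd (midSet C) ∨ ∃ (i0 : Fin 5) (v : Fin 5 → ℝ),
      v i0 = 0 ∧ (∀ k, k ≠ i0 → 0 < v k) ∧ (∑ k, v k) = 1 ∧ (∑ k, v k • t k) = t i0 := by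
  classical
  set P := Finset.univ.filter (fun i => 0 < w i) with hPdef
  set N := Finset.univ.filter (fun i => w i < 0) with hNdef
  have hiN : ∀ k ∈ N, w k < 0 := fun k hk => (Finset.mem_filter.mp hk).2
  have hiP : ∀ k ∈ P, 0 < w k := fun k hk => (Finset.mem_filter.mp hk).2
  have hsplit0 : (∑ i ∈ P, w i) + ∑ i ∈ N, w i = 0 := by
    rw [← sum_PN w w (fun i h => h)]; exact hw0
  have hsplitt : (∑ i ∈ P, w i • t i) + ∑ i ∈ N, w i • t i = 0 := by
    rw [← sum_PN w (fun i => w i • t i) (fun i h => by show w i • t i = 0; rw [h, zero_smul])]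
    exact hwt
  obtain ⟨ip, hip⟩ := hP
  have hPne : P.Nonempty := ⟨ip, Finset.mem_filter.mpr ⟨Finset.mem_univ _, hip⟩⟩
  have hdisjPN : Disjoint P N := by
    rw [Finset.disjoint_left]; intro k hkP hkN
    exact absurd (hiP k hkP) (not_lt.mpr (hiN k hkN).le)
  have hcard2 : P.card ≤ 2 := by
    have h1 : (P ∪ N).card = P.card + N.card := Finset.card_union_of_disjoint hdisjPN
    have h2 : (P ∪ N).card ≤ 5 := by
      have := Finset.card_le_card (Finset.subset_univ (P ∪ N))
      simpa using this
    omega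
  have hcard1 : 1 ≤ P.card := Finset.card_pos.mpr hPne
  have hNP : ∀ k, k ∈ N → k ∉ P := fun k hk hk' => absurd (hiP k hk') (not_lt.mpr (hiN k hk).le)
  rcases (by omega : P.card = 1 ∨ P.card = 2) with hc | hc
  · -- singleton positive part
    obtain ⟨i0, hP1⟩ := Finset.card_eq_one.mp hc
    have hwi0 : 0 < w i0 := hiP i0 (by rw [hP1]; exact Finset.mem_singleton_self i0)
    have hsumP : ∑ k ∈ P, w k = w i0 := by rw [hP1, Finset.sum_singleton]
    have hsumPt : ∑ k ∈ P, w k • t k = w i0 • t i0 := by rw [hP1, Finset.sum_singleton]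
    have hsumN : ∑ k ∈ N, w k = -(w i0) := by rw [hsumP] at hsplit0; linarith
    have hsumNt : ∑ k ∈ N, w k • t k = -(w i0 • t i0) := by
      rw [hsumPt] at hsplitt
      exact eq_neg_of_add_eq_zero_right hsplitt
    have hi0N : i0 ∉ N := fun h => absurd hwi0 (not_lt.mpr (hiN i0 h).le)
    have hrepN : ∑ k ∈ N, ((w i0)⁻¹ * (-w k)) • t k = t i0 := by
      have : ∀ k ∈ N, ((w i0)⁻¹ * (-w k)) • t k = (w i0)⁻¹ • (-(w k • t k)) := by
        intro k _
        rw [mul_smul, neg_smul, smul_neg]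
      rw [Finset.sum_congr rfl this, ← Finset.smul_sum, Finset.sum_neg_distrib, hsumNt,
        neg_neg, smul_smul, inv_mul_cancel₀ (ne_of_gt hwi0), one_smul]
    have hsum1 : ∑ k ∈ N, (w i0)⁻¹ * (-w k) = 1 := by
      rw [← Finset.mul_sum, Finset.sum_neg_distrib, hsumN, neg_neg,
        inv_mul_cancel₀ (ne_of_gt hwi0)]
    by_cases hfree : ∃ j0, j0 ≠ i0 ∧ j0 ∉ N
    · obtain ⟨j0, hj0i, hj0N⟩ := hfree
      left
      refine patternB C (Ne.symm hj0i) (ht i0) (ht j0) N t (fun k => (w i0)⁻¹ * (-w k))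
        ?_ ?_ ?_ hsum1 hrepN
      · intro k hk
        exact ⟨k, fun h => hj0N (h ▸ hk), ht k⟩
      · intro k hk
        exact htne k i0 (fun h => hi0N (h ▸ hk))
      · intro k hk
        show 0 ≤ (w i0)⁻¹ * (-w k)
        exact mul_nonneg (inv_nonneg.mpr hwi0.le) (neg_nonneg.mpr (hiN k hk).le)
    · push_neg at hfree
      right
      have hNuniv : N = Finset.univ.erase i0 := by
        ext k
        simp only [Finset.mem_erase, Finset.mem_univ, and_true]
        constructor
        · intro hk; exact fun h => hi0N (h ▸ hk)
        · intro hk; exact hfree k hk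
      refine ⟨i0, fun k => if k = i0 then 0 else (w i0)⁻¹ * (-w k), by simp, ?_, ?_, ?_⟩
      · intro k hk
        show 0 < if k = i0 then (0:ℝ) else (w i0)⁻¹ * (-w k)
        rw [if_neg hk]
        exact mul_pos (inv_pos.mpr hwi0) (neg_pos.mpr (hiN k (hfree k hk)))
      · show (∑ k, if k = i0 then (0:ℝ) else (w i0)⁻¹ * (-w k)) = 1
        rw [← Finset.add_sum_erase Finset.univ
          (fun k => if k = i0 then (0:ℝ) else (w i0)⁻¹ * (-w k)) (Finset.mem_univ i0)]
        rw [if_pos rfl, zero_add, ← hNuniv]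
        rw [Finset.sum_congr rfl (fun k hk => if_neg (fun h : k = i0 => hi0N (h ▸ hk)))]
        exact hsum1
      · show (∑ k, (if k = i0 then (0:ℝ) else (w i0)⁻¹ * (-w k)) • t k) = t i0
        rw [← Finset.add_sum_erase Finset.univ
          (fun k => (if k = i0 then (0:ℝ) else (w i0)⁻¹ * (-w k)) • t k) (Finset.mem_univ i0)]
        rw [if_pos rfl, zero_smul, zero_add, ← hNuniv]
        rw [Finset.sum_congr rfl
          (fun k hk => by rw [if_neg (fun h : k = i0 => hi0N (h ▸ hk))])]
        exact hrepN
  · -- two-element positive part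
    obtain ⟨i, j, hijne, hP2⟩ := Finset.card_eq_two.mp hc
    have hwi : 0 < w i := hiP i (by rw [hP2]; simp)
    have hwj : 0 < w j := hiP j (by rw [hP2]; simp)
    have hσ : 0 < w i + w j := by linarith
    have hsumP : ∑ k ∈ P, w k = w i + w j := by rw [hP2, Finset.sum_pair hijne]
    have hsumPt : ∑ k ∈ P, w k • t k = w i • t i + w j • t j := by
      rw [hP2, Finset.sum_pair hijne]
    have hsumN : ∑ k ∈ N, w k = -(w i + w j) := by rw [hsumP] at hsplit0; linarith
    have hsumNt : ∑ k ∈ N, w k • t k = -(w i • t i + w j • t j) := by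
      rw [hsumPt] at hsplitt
      exact eq_neg_of_add_eq_zero_right hsplitt
    have hiNi : i ∉ N := fun h => absurd hwi (not_lt.mpr (hiN i h).le)
    have hiNj : j ∉ N := fun h => absurd hwj (not_lt.mpr (hiN j h).le)
    left
    refine patternA C hijne (ht i) (ht j) (α := w i / (w i + w j)) (β := w j / (w i + w j))
      (by positivity) (by positivity) (by field_simp) N t (fun k => (w i + w j)⁻¹ * (-w k))
      ?_ ?_ ?_ ?_ ?_ ?_
    · intro k hk
      exact ⟨k, fun h => hiNi (h ▸ hk), fun h => hiNj (h ▸ hk), ht k⟩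
    · intro k hk
      exact htne k i (fun h => hiNi (h ▸ hk))
    · intro k hk
      exact htne k j (fun h => hiNj (h ▸ hk))
    · intro k hk
      show 0 ≤ (w i + w j)⁻¹ * (-w k)
      exact mul_nonneg (inv_nonneg.mpr hσ.le) (neg_nonneg.mpr (hiN k hk).le)
    · rw [← Finset.mul_sum, Finset.sum_neg_distrib, hsumN, neg_neg,
        inv_mul_cancel₀ (ne_of_gt hσ)]
    · have : ∀ k ∈ N, ((w i + w j)⁻¹ * (-w k)) • t k = (w i + w j)⁻¹ • (-(w k • t k)) := by
        intro k _
        rw [mul_smul, neg_smul, smul_neg]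
      rw [Finset.sum_congr rfl this, ← Finset.smul_sum, Finset.sum_neg_distrib, hsumNt,
        neg_neg, smul_add, div_eq_inv_mul, div_eq_inv_mul, mul_smul, mul_smul]


/-- There are no five pairwise disjoint two-point sets `C₁, …, C₅ ⊂ ℝ³` whose set of
midpoints between different `Cᵢ`'s is convexly independent (i.e. no geometric graph in
`ℝ³` with convexly independent edge midpoints contains `K_{2,2,2,2,2}`). -/

theorem no_K22222 :
    ¬ ∃ C : Fin 5 → Finset (Fin 3 → ℝ),
      (∀ i, (C i).card = 2) ∧
      (∀ i j, i ≠ j → Disjoint (C i) (C j)) ∧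
      ConvInd (midSet C) := by
  rintro ⟨C, hcard, hdisj, hCI⟩
  classical
  have h2 : ∀ i, ∃ x y : NoKV, x ≠ y ∧ C i = {x, y} := fun i => Finset.card_eq_two.mp (hcard i)
  choose a b hab hCab using h2
  have ha : ∀ i, a i ∈ C i := fun i => by rw [hCab i]; exact Finset.mem_insert_self _ _
  have hb : ∀ i, b i ∈ C i := fun i => by rw [hCab i]; simp
  have hpt : ∀ (i j : Fin 5), i ≠ j → ∀ p ∈ C i, ∀ q ∈ C j, p ≠ q := by
    intro i j hij p hp q hq heq
    exact Finset.disjoint_left.mp (hdisj i j hij) hp (heq ▸ hq)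
  -- driver: any transversal admits a "(1,4) interior" representation, or else we are done
  have driver : ∀ (t : Fin 5 → NoKV), (∀ k, t k ∈ C k) →
      ∃ (i0 : Fin 5) (v : Fin 5 → ℝ),
        v i0 = 0 ∧ (∀ k, k ≠ i0 → 0 < v k) ∧ (∑ k, v k) = 1 ∧ (∑ k, v k • t k) = t i0 := by
    intro t ht
    have htne : ∀ p q : Fin 5, p ≠ q → t p ≠ t q := fun p q h => hpt p q h _ (ht p) _ (ht q)
    obtain ⟨w, hw0, hwt, i, hwi⟩ := exists_dep t
    rcases le_total ((Finset.univ.filter fun i => 0 < w i).card)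
        ((Finset.univ.filter fun i => w i < 0).card) with hle | hle
    · rcases depCase C t ht htne w hw0 hwt hle (exists_pos_entry w hw0 hwi) with h | h
      · exact absurd hCI h
      · exact h
    · have hw0' : ∑ i, (-w) i = 0 := by
        simp only [Pi.neg_apply, Finset.sum_neg_distrib, hw0, neg_zero]
      have hwt' : ∑ i, (-w) i • t i = 0 := by
        simp only [Pi.neg_apply, neg_smul, Finset.sum_neg_distrib, hwt, neg_zero]
      have hfe1 : (Finset.univ.filter fun i => 0 < (-w) i)
          = (Finset.univ.filter fun i => w i < 0) := by
        apply Finset.filter_congr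
        intro k _
        simp [neg_pos]
      have hfe2 : (Finset.univ.filter fun i => (-w) i < 0)
          = (Finset.univ.filter fun i => 0 < w i) := by
        apply Finset.filter_congr
        intro k _
        simp
      rcases depCase C t ht htne (-w) hw0' hwt' (by rw [hfe1, hfe2]; exact hle)
          (exists_pos_entry (-w) hw0' (i₀ := i) (by simpa using hwi)) with h | h
      · exact absurd hCI h
      · exact h
  obtain ⟨i0, w1, hw1i0, hw1pos, hw1sum, hw1rep⟩ := driver a ha
  have hw1nn : ∀ k, 0 ≤ w1 k := by
    intro k
    by_cases h : k = i0
    · subst h; rw [hw1i0]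
    · exact (hw1pos k h).le
  have hane : ∀ p q : Fin 5, p ≠ q → a p ≠ a q := fun p q h => hpt p q h _ (ha p) _ (ha q)
  set t' : Fin 5 → NoKV := Function.update a i0 (b i0) with ht'def
  have ht'i0 : t' i0 = b i0 := Function.update_self _ _ _
  have ht'ne : ∀ k, k ≠ i0 → t' k = a k := fun k hk => Function.update_of_ne hk _ _
  have ht'mem : ∀ k, t' k ∈ C k := by
    intro k
    by_cases hk : k = i0
    · subst hk; rw [ht'i0]; exact hb k
    · rw [ht'ne k hk]; exact ha k
  have ht'x0 : ∀ k, t' k ≠ a i0 := by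
    intro k
    by_cases hk : k = i0
    · subst hk; rw [ht'i0]; exact (hab k).symm
    · rw [ht'ne k hk]; exact hane k i0 hk
  obtain ⟨i1, v', hv'i1, hv'pos, hv'sum, hv'rep⟩ := driver t' ht'mem
  have hv'nn : ∀ k, 0 ≤ v' k := by
    intro k
    by_cases h : k = i1
    · subst h; rw [hv'i1]
    · exact (hv'pos k h).le
  by_cases hI : i1 = i0
  · -- ray case : both a i0 and b i0 lie in the convex hull of the other a's
    subst hI
    have hbrep : ∑ k, v' k • a k = b i1 := by
      have h1 : ∑ k, v' k • t' k = b i1 := by rw [hv'rep, ht'i0]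
      rw [← h1]
      refine Finset.sum_congr rfl fun k _ => ?_
      by_cases hk : k = i1
      · subst hk; rw [hv'i1, zero_smul, zero_smul]
      · rw [ht'ne k hk]
    set δ : Fin 5 → ℝ := fun k => w1 k - v' k with hδdef
    have hδ0 : ∑ k, δ k = 0 := by
      show ∑ k, (w1 k - v' k) = 0
      rw [Finset.sum_sub_distrib, hw1sum, hv'sum, sub_self]
    have hδa : ∑ k, δ k • a k = a i1 - b i1 := by
      show ∑ k, (w1 k - v' k) • a k = _
      simp only [sub_smul]
      rw [Finset.sum_sub_distrib, hw1rep, hbrep]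
    have hδi0 : δ i1 = 0 := by
      show w1 i1 - v' i1 = 0
      rw [hw1i0, hv'i1, sub_self]
    have hδneg : ∃ k, δ k < 0 := by
      by_contra h
      push_neg at h
      have hall : ∀ k ∈ Finset.univ, δ k = 0 :=
        (Finset.sum_eq_zero_iff_of_nonneg (fun k _ => h k)).mp hδ0
      have hz : a i1 - b i1 = 0 := by
        rw [← hδa]
        exact Finset.sum_eq_zero fun k hk => by rw [hall k hk, zero_smul]
      exact hab i1 (by rwa [sub_eq_zero] at hz)
    set D := Finset.univ.filter (fun k => δ k < 0) with hDdef
    have hDne : D.Nonempty := by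
      obtain ⟨k, hk⟩ := hδneg
      exact ⟨k, Finset.mem_filter.mpr ⟨Finset.mem_univ _, hk⟩⟩
    obtain ⟨js, hjsD, hjmin⟩ := Finset.exists_min_image D (fun k => w1 k / (-δ k)) hDne
    have hδjs : δ js < 0 := (Finset.mem_filter.mp hjsD).2
    have hji0 : js ≠ i1 := fun h => by rw [h, hδi0] at hδjs; exact lt_irrefl 0 hδjs
    set τ := w1 js / (-δ js) with hτdef
    have hτpos : 0 < τ := div_pos (hw1pos js hji0) (neg_pos.mpr hδjs)
    set μ : Fin 5 → ℝ := fun k => w1 k + τ * δ k with hμdef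
    have hμjs : μ js = 0 := by
      show w1 js + τ * δ js = 0
      rw [hτdef]
      have hne : -δ js ≠ 0 := ne_of_gt (neg_pos.mpr hδjs)
      field_simp
      rw [div_self (ne_of_lt hδjs)]; ring
    have hμnn : ∀ k, 0 ≤ μ k := by
      intro k
      show 0 ≤ w1 k + τ * δ k
      by_cases hk : δ k < 0
      · have hkD : k ∈ D := Finset.mem_filter.mpr ⟨Finset.mem_univ _, hk⟩
        have hle := hjmin k hkD
        have hpos : 0 < -δ k := neg_pos.mpr hk
        rw [le_div_iff₀ hpos] at hle
        nlinarith
      · have h1 : 0 ≤ δ k := not_lt.mp hk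
        have := mul_nonneg hτpos.le h1
        have := hw1nn k
        linarith
    have hμi0 : μ i1 = 0 := by
      show w1 i1 + τ * δ i1 = 0
      rw [hw1i0, hδi0, mul_zero, add_zero]
    have hμsum : ∑ k, μ k = 1 := by
      show ∑ k, (w1 k + τ * δ k) = 1
      rw [Finset.sum_add_distrib, hw1sum, ← Finset.mul_sum, hδ0, mul_zero, add_zero]
    have hμa : ∑ k, μ k • a k = a i1 + τ • (a i1 - b i1) := by
      show ∑ k, (w1 k + τ * δ k) • a k = _
      simp only [add_smul, mul_smul]
      rw [Finset.sum_add_distrib, hw1rep, ← Finset.smul_sum, hδa]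
    have h1τ : (0:ℝ) < 1 + τ := by linarith
    -- the combined function
    set f : Fin 5 → ℝ := fun k => if k = i1 then τ else μ k with hfdef
    have hfsplit : ∀ k, f k = μ k + (if k = i1 then τ else 0) := by
      intro k
      by_cases hk : k = i1
      · subst hk; rw [hfdef]; simp [hμi0]
      · rw [hfdef]; simp [hk]
    have hfjs : f js = 0 := by
      rw [hfdef]
      simp only [if_neg hji0]
      exact hμjs
    have hfsum : ∑ k ∈ Finset.univ.erase js, f k = 1 + τ := by
      rw [Finset.sum_erase _ hfjs]
      rw [Finset.sum_congr rfl (fun k _ => hfsplit k), Finset.sum_add_distrib, hμsum]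
      simp
    have hfrep : ∑ k ∈ Finset.univ.erase js, f k • t' k = (1 + τ) • a i1 := by
      have hfz : f js • t' js = 0 := by rw [hfjs, zero_smul]
      have herase := Finset.sum_erase (f := fun k => f k • t' k) (a := js) Finset.univ
        (by simpa using hfz)
      rw [herase]
      have hsplit2 : ∀ k ∈ Finset.univ, f k • t' k = μ k • a k + (if k = i1 then τ • b i1 else 0) := by
        intro k _
        by_cases hk : k = i1
        · subst hk
          rw [hfdef]
          simp only [if_pos rfl, hμi0, zero_smul, zero_add, ht'i0]
          simp
        · rw [hfdef]
          simp only [if_neg hk]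
          rw [ht'ne k hk, add_zero]
      rw [Finset.sum_congr rfl hsplit2, Finset.sum_add_distrib, hμa]
      rw [Finset.sum_ite_eq' Finset.univ i1 (fun _ => τ • b i1)]
      simp only [Finset.mem_univ, if_pos]
      module
    refine absurd hCI (patternB C (show i1 ≠ js from fun h => hji0 h.symm) (ha i1) (ha js)
      (Finset.univ.erase js) t' (fun k => (1 + τ)⁻¹ * f k) ?_ ?_ ?_ ?_ ?_)
    · intro k hk
      exact ⟨k, Finset.ne_of_mem_erase hk, ht'mem k⟩
    · intro k _
      exact ht'x0 k
    · intro k hk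
      show 0 ≤ (1 + τ)⁻¹ * f k
      refine mul_nonneg (inv_nonneg.mpr h1τ.le) ?_
      rw [hfsplit k]
      by_cases hki : k = i1
      · simp [hki, hμnn i1, hτpos.le]
        positivity
      · simp [hki, hμnn k]
    · rw [← Finset.mul_sum, hfsum, inv_mul_cancel₀ (ne_of_gt h1τ)]
    · have : ∀ k ∈ Finset.univ.erase js, ((1 + τ)⁻¹ * f k) • t' k
          = (1 + τ)⁻¹ • (f k • t' k) := fun k _ => by rw [mul_smul]
      rw [Finset.sum_congr rfl this, ← Finset.smul_sum, hfrep, smul_smul,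
        inv_mul_cancel₀ (ne_of_gt h1τ), one_smul]
  · -- substitution case
    have hIi : i0 ≠ i1 := fun h => hI h.symm
    have ht'i1 : t' i1 = a i1 := ht'ne i1 hI
    have hw1t' : ∑ k, w1 k • t' k = a i0 := by
      rw [← hw1rep]
      refine Finset.sum_congr rfl fun k _ => ?_
      by_cases hk : k = i0
      · subst hk; rw [hw1i0, zero_smul, zero_smul]
      · rw [ht'ne k hk]
    set ω : Fin 5 → ℝ := fun k => w1 i1 * v' k + w1 k with hωdef
    have hωi1 : ω i1 = w1 i1 := by
      show w1 i1 * v' i1 + w1 i1 = w1 i1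
      rw [hv'i1, mul_zero, zero_add]
    have hωsum : ∑ k ∈ Finset.univ.erase i1, ω k = 1 := by
      rw [Finset.sum_erase_eq_sub (Finset.mem_univ i1), hωi1]
      show (∑ k, (w1 i1 * v' k + w1 k)) - w1 i1 = 1
      rw [Finset.sum_add_distrib, ← Finset.mul_sum, hv'sum, mul_one, hw1sum]
      ring
    have hωrep : ∑ k ∈ Finset.univ.erase i1, ω k • t' k = a i0 := by
      rw [Finset.sum_erase_eq_sub (Finset.mem_univ i1)]
      have h1 : ∑ k, ω k • t' k = w1 i1 • a i1 + a i0 := by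
        show ∑ k, (w1 i1 * v' k + w1 k) • t' k = _
        simp only [add_smul, mul_smul]
        rw [Finset.sum_add_distrib, hw1t', ← Finset.smul_sum, hv'rep, ht'i1]
      rw [h1, hωi1, ht'i1]
      module
    refine absurd hCI (patternB C hIi (ha i0) (ha i1)
      (Finset.univ.erase i1) t' ω ?_ ?_ ?_ hωsum hωrep)
    · intro k hk
      exact ⟨k, Finset.ne_of_mem_erase hk, ht'mem k⟩
    · intro k _
      exact ht'x0 k
    · intro k _
      show 0 ≤ w1 i1 * v' k + w1 k
      have := mul_nonneg (hw1nn i1) (hv'nn k)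
      have := hw1nn k
      linarith
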